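/- Let r ≥ 2 be an integer and define P(x, y) = ((x + r*y)^(r+1) - (r+1)^(r+1) * x * y^r) / (x - y)^2 for x ≠ y. Then for all positive reals x, y with x ≠ y, P(x, y) < r^(r+2) * (x + r*y)^(r-1), i.e. P(x,y)/(x + r*y)^(r-1) < r^(r+2). -/

import Mathlib

open Finset

lemma nat1 (r : ℕ) (hr : 1 ≤ r) : 2 * r ^ r ≤ (r + 1) ^ r := by
  rw [add_pow, Finset.sum_range_succ]
  have h1 : r ^ (r-1) * 1 ^ (r - (r-1)) * r.choose (r-1) ≤
      ∑ k ∈ Finset.range r, r ^ k * 1 ^ (r - k) * r.choose k := by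
    apply Finset.single_le_sum (f := fun k => r ^ k * 1 ^ (r - k) * r.choose k)
    · intro i _; positivity
    · exact Finset.mem_range.mpr (by omega)
  have h2 : r ^ (r-1) * 1 ^ (r - (r-1)) * r.choose (r-1) = r ^ r := by
    have : r.choose (r-1) = r := by
      have := Nat.choose_symm (le_refl r)
      rw [show r - 1 = r - 1 from rfl]
      rw [← Nat.choose_symm (by omega : r - 1 ≤ r)]
      simp [show r - (r-1) = 1 from by omega]
    rw [this, one_pow, mul_one]
    rw [← pow_succ]
    congr 1; omega
  have h3 : r ^ r * 1 ^ (r - r) * r.choose r = r ^ r := by simp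
  simp only [Nat.cast_id] at *
  omega

lemma nat2 (r n : ℕ) (hr : 1 ≤ r) (hn : r ≤ n) : 2 * r ^ n ≤ (r + 1) ^ n := by
  have e : n = r + (n - r) := by omega
  rw [e, pow_add, pow_add, ← mul_assoc]
  exact Nat.mul_le_mul (nat1 r hr) (Nat.pow_le_pow_left (by omega) _)

lemma nat3 (r : ℕ) (hr : 2 ≤ r) : 4 ^ r ≤ r ^ (r + 2) := by
  induction r, hr using Nat.le_induction with
  | base => decide
  | succ n hn ih =>
    have h1 : 4 ^ (n + 1) = 4 * 4 ^ n := by ring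
    have h2 : 2 * (2 * n ^ (n + 2)) ≤ 2 * (n + 1) ^ (n + 2) :=
      Nat.mul_le_mul_left 2 (nat2 n (n+2) (by omega) (by omega))
    have h3 : 2 * (n + 1) ^ (n + 2) ≤ (n + 1) * (n + 1) ^ (n + 2) :=
      Nat.mul_le_mul_right _ (by omega)
    have h4 : (n + 1) * (n + 1) ^ (n + 2) = (n + 1) ^ (n + 1 + 2) := by
      rw [← pow_succ']
    calc 4 ^ (n+1) = 4 * 4 ^ n := h1
      _ ≤ 4 * n ^ (n + 2) := Nat.mul_le_mul_left 4 ih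
      _ ≤ (n + 1) ^ (n + 1 + 2) := by omega

lemma nat4 (r : ℕ) (hr : 2 ≤ r) : 2 ^ (r + 1) * (r + 1) ^ (r - 1) ≤ r ^ (2 * r + 1) := by
  have h1 : (r + 1) ^ (r - 1) ≤ (2 * r) ^ (r - 1) := Nat.pow_le_pow_left (by omega) _
  have h2 : 2 ^ (r + 1) * (2 * r) ^ (r - 1) = 4 ^ r * r ^ (r - 1) := by
    rw [mul_pow, ← mul_assoc, ← pow_add]
    have : r + 1 + (r - 1) = 2 * r := by omega
    rw [this, show (4:ℕ) = 2 ^ 2 from rfl, ← pow_mul]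
  have h3 : 4 ^ r * r ^ (r - 1) ≤ r ^ (r + 2) * r ^ (r - 1) :=
    Nat.mul_le_mul_right _ (nat3 r hr)
  have h4 : r ^ (r + 2) * r ^ (r - 1) = r ^ (2 * r + 1) := by
    rw [← pow_add]; congr 1; omega
  calc 2 ^ (r+1) * (r+1)^(r-1) ≤ 2^(r+1) * (2*r)^(r-1) := Nat.mul_le_mul_left _ h1
    _ = 4 ^ r * r ^ (r-1) := h2
    _ ≤ r ^ (r+2) * r ^ (r-1) := h3
    _ = r ^ (2*r+1) := h4

lemma sum_choose_bound (r : ℕ) : (∑ k ∈ Finset.range r, (r+1).choose (k+2)) ≤ 2 ^ (r + 1) := by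
  have e : ∑ k ∈ Finset.range r, (r+1).choose (k+2)
      = ∑ j ∈ Finset.Ico 2 (r+2), (r+1).choose j := by
    rw [Finset.sum_Ico_eq_sum_range]
    simp [add_comm]
  rw [e]
  calc ∑ j ∈ Finset.Ico 2 (r+2), (r+1).choose j
      ≤ ∑ j ∈ Finset.range (r+2), (r+1).choose j := by
        apply Finset.sum_le_sum_of_subset
        intro j hj
        rw [Finset.mem_Ico] at hj
        exact Finset.mem_range.mpr hj.2
    _ = 2 ^ (r + 1) := Nat.sum_range_choose (r+1)

lemma identity (r : ℕ) (a d : ℝ) :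
    (a + d) ^ (r + 1) = a ^ (r + 1) + ((r : ℝ) + 1) * a ^ r * d
      + d ^ 2 * ∑ k ∈ Finset.range r, ((r + 1).choose (k + 2) : ℝ) * a ^ (r - 1 - k) * d ^ k := by
  rw [add_comm a d, add_pow, Finset.sum_range_succ', Finset.sum_range_succ']
  have h1 : ∀ k ∈ Finset.range r,
      d ^ (k + 1 + 1) * a ^ (r + 1 - (k + 1 + 1)) * ((r + 1).choose (k + 1 + 1) : ℝ)
        = d ^ 2 * (((r + 1).choose (k + 2) : ℝ) * a ^ (r - 1 - k) * d ^ k) := by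
    intro k hk
    rw [Finset.mem_range] at hk
    have e : r + 1 - (k + 1 + 1) = r - 1 - k := by omega
    rw [e, show k + 1 + 1 = k + 2 from rfl]
    ring
  rw [Finset.sum_congr rfl h1, ← Finset.mul_sum]
  simp [Nat.choose_one_right]
  ring

lemma powmul (a b M : ℝ) (i k : ℕ) (ha : 0 < a) (haM : a < M) (hb : 0 < b) (hbM : b < M)
    (h : 1 ≤ i + k) : a ^ i * b ^ k < M ^ (i + k) := by
  rcases Nat.eq_zero_or_pos k with hk | hk
  · subst hk
    simp only [pow_zero, mul_one, Nat.add_zero]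
    exact pow_lt_pow_left₀ haM ha.le (by omega)
  · calc a ^ i * b ^ k ≤ M ^ i * b ^ k :=
        mul_le_mul_of_nonneg_right (pow_le_pow_left₀ ha.le haM.le i) (pow_nonneg hb.le k)
      _ < M ^ i * M ^ k :=
        mul_lt_mul_of_pos_left (pow_lt_pow_left₀ hbM hb.le (by omega)) (pow_pos (ha.trans haM) i)
      _ = M ^ (i + k) := (pow_add M i k).symm

theorem stmt_5 (r : ℕ) (hr : 2 ≤ r) (x y : ℝ) (hx : 0 < x) (hy : 0 < y) (hxy : x ≠ y) :
    ((x + r * y) ^ (r + 1) - (r + 1 : ℝ) ^ (r + 1) * x * y ^ r) / (x - y) ^ 2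
      < (r : ℝ) ^ (r + 2) * (x + r * y) ^ (r - 1) := by
  have hrR : (2 : ℝ) ≤ (r : ℝ) := by exact_mod_cast hr
  have hr0 : (0 : ℝ) < (r : ℝ) := by linarith
  have hs : (0 : ℝ) < x + r * y := by nlinarith
  have hd : x - y ≠ 0 := sub_ne_zero.mpr hxy
  have hd2 : (0 : ℝ) < (x - y) ^ 2 := pow_two_pos_of_ne_zero hd
  set S : ℝ := ∑ k ∈ Finset.range r,
      ((r + 1).choose (k + 2) : ℝ) * (((r : ℝ) + 1) * y) ^ (r - 1 - k) * (x - y) ^ k with hS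
  have key : (x + r * y) ^ (r + 1) - ((r : ℝ) + 1) ^ (r + 1) * x * y ^ r = (x - y) ^ 2 * S := by
    have h0 := identity r (((r : ℝ) + 1) * y) (x - y)
    have ha : ((r : ℝ) + 1) * y + (x - y) = x + r * y := by ring
    rw [ha] at h0
    rw [h0, mul_pow, mul_pow]
    ring
  rw [div_lt_iff₀ hd2, key]
  -- bound S
  set M : ℝ := ((r : ℝ) + 1) / r * (x + r * y) with hM
  have hone : (1 : ℝ) ≤ ((r : ℝ) + 1) / r := by
    rw [le_div_iff₀ hr0]; linarith
  have hsM : x + r * y ≤ M := le_mul_of_one_le_left hs.le hone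
  have hMpos : (0 : ℝ) < M := lt_of_lt_of_le hs hsM
  have hay : (0 : ℝ) < ((r : ℝ) + 1) * y := by nlinarith
  have haM : ((r : ℝ) + 1) * y < M := by
    rw [hM, div_mul_eq_mul_div, lt_div_iff₀ hr0]
    nlinarith
  have h0abs : (0 : ℝ) < |x - y| := abs_pos.mpr hd
  have habs : |x - y| < x + r * y := by
    rw [abs_sub_lt_iff]
    constructor <;> nlinarith
  have habsM : |x - y| < M := habs.trans_le hsM
  have step1 : S ≤ ∑ k ∈ Finset.range r,
      ((r + 1).choose (k + 2) : ℝ) * (((r : ℝ) + 1) * y) ^ (r - 1 - k) * |x - y| ^ k := by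
    apply Finset.sum_le_sum
    intro k _
    have h1 : (x - y) ^ k ≤ |x - y| ^ k := by
      rw [← abs_pow]; exact le_abs_self _
    have h2 : (0 : ℝ) ≤ ((r + 1).choose (k + 2) : ℝ) * (((r : ℝ) + 1) * y) ^ (r - 1 - k) := by
      positivity
    exact mul_le_mul_of_nonneg_left h1 h2
  have step2 : (∑ k ∈ Finset.range r,
        ((r + 1).choose (k + 2) : ℝ) * (((r : ℝ) + 1) * y) ^ (r - 1 - k) * |x - y| ^ k)
      < ∑ k ∈ Finset.range r, ((r + 1).choose (k + 2) : ℝ) * M ^ (r - 1) := by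
    apply Finset.sum_lt_sum_of_nonempty (Finset.nonempty_range_iff.mpr (by omega))
    intro k hk
    rw [Finset.mem_range] at hk
    have hC : (0 : ℝ) < ((r + 1).choose (k + 2) : ℝ) := by
      exact_mod_cast Nat.choose_pos (by omega : k + 2 ≤ r + 1)
    rw [mul_assoc]
    apply mul_lt_mul_of_pos_left _ hC
    have hp := powmul (((r : ℝ) + 1) * y) |x - y| M (r - 1 - k) k hay haM h0abs habsM (by omega)
    rwa [show r - 1 - k + k = r - 1 from by omega] at hp
  have step3 : (∑ k ∈ Finset.range r, ((r + 1).choose (k + 2) : ℝ) * M ^ (r - 1))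
      ≤ 2 ^ (r + 1) * M ^ (r - 1) := by
    rw [← Finset.sum_mul]
    apply mul_le_mul_of_nonneg_right _ (pow_nonneg hMpos.le _)
    calc (∑ k ∈ Finset.range r, ((r + 1).choose (k + 2) : ℝ))
        = ((∑ k ∈ Finset.range r, (r + 1).choose (k + 2) : ℕ) : ℝ) := by push_cast; rfl
      _ ≤ ((2 ^ (r + 1) : ℕ) : ℝ) := by exact_mod_cast sum_choose_bound r
      _ = 2 ^ (r + 1) := by push_cast; rfl
  have step4 : (2 : ℝ) ^ (r + 1) * M ^ (r - 1) ≤ (r : ℝ) ^ (r + 2) * (x + r * y) ^ (r - 1) := by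
    have hrpow : (0 : ℝ) < (r : ℝ) ^ (r - 1) := pow_pos hr0 _
    rw [← mul_le_mul_iff_of_pos_right hrpow]
    have e1 : M ^ (r - 1) * (r : ℝ) ^ (r - 1) = (((r : ℝ) + 1) * (x + r * y)) ^ (r - 1) := by
      rw [hM, ← mul_pow]
      congr 1
      field_simp
    calc (2 : ℝ) ^ (r + 1) * M ^ (r - 1) * (r : ℝ) ^ (r - 1)
        = 2 ^ (r + 1) * ((((r : ℝ) + 1)) ^ (r - 1) * (x + r * y) ^ (r - 1)) := by
          rw [mul_assoc, e1, mul_pow]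
      _ = (2 ^ (r + 1) * ((r : ℝ) + 1) ^ (r - 1)) * (x + r * y) ^ (r - 1) := by ring
      _ ≤ (r : ℝ) ^ (2 * r + 1) * (x + r * y) ^ (r - 1) := by
          apply mul_le_mul_of_nonneg_right _ (pow_nonneg hs.le _)
          calc (2 : ℝ) ^ (r + 1) * ((r : ℝ) + 1) ^ (r - 1)
              = ((2 ^ (r + 1) * (r + 1) ^ (r - 1) : ℕ) : ℝ) := by push_cast; ring
            _ ≤ ((r ^ (2 * r + 1) : ℕ) : ℝ) := by exact_mod_cast nat4 r hr
            _ = (r : ℝ) ^ (2 * r + 1) := by push_cast; rfl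
      _ = (r : ℝ) ^ (r + 2) * (x + r * y) ^ (r - 1) * (r : ℝ) ^ (r - 1) := by
          rw [show (r : ℝ) ^ (r + 2) * (x + r * y) ^ (r - 1) * (r : ℝ) ^ (r - 1)
              = (r : ℝ) ^ (r + 2) * (r : ℝ) ^ (r - 1) * (x + r * y) ^ (r - 1) from by ring,
            ← pow_add]
          congr 2
          omega
  have hQ : S < (r : ℝ) ^ (r + 2) * (x + r * y) ^ (r - 1) := by
    calc S ≤ _ := step1
      _ < _ := step2
      _ ≤ 2 ^ (r + 1) * M ^ (r - 1) := step3
      _ ≤ _ := step4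
  calc (x - y) ^ 2 * S = S * (x - y) ^ 2 := mul_comm _ _
    _ < (r : ℝ) ^ (r + 2) * (x + r * y) ^ (r - 1) * (x - y) ^ 2 :=
      mul_lt_mul_of_pos_right hQ hd2
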